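/- Let N be a positive integer and let λ_φ, λ_ψ, b, c, t_φ, n_φ, e be integers satisfying λ_ψ ≡ c·λ_φ + b (mod N), λ_φ² - t_φ·λ_φ + n_φ ≡ 0 (mod N), and λ_ψ² ≡ e (mod N). Set b₁ := (e, 0, -b, -c), b₂ := (0, e, c·n_φ, -c·t_φ - b), b₃ := (-b, -c, 1, 0), b₄ := (c·n_φ, -c·t_φ - b, 0, 1), and let L := {(z₁, z₂, z₃, z₄) ∈ ℤ⁴ : z₁ + z₂·λ_φ + z₃·λ_ψ + z₄·λ_φ·λ_ψ ≡ 0 (mod N)}. Then: (i) b₁, b₂, b₃, b₄ all lie in L; (ii) if N equals the absolute value of the determinant of the 4×4 integer matrix with rows b₁, b₂, b₃, b₄, then L equals the ℤ-span of {b₁, b₂, b₃, b₄}. -/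

import Mathlib

/-- The lattice L = {(z₁, z₂, z₃, z₄) ∈ ℤ⁴ : z₁ + z₂·λ_φ + z₃·λ_ψ + z₄·λ_φ·λ_ψ ≡ 0 (mod N)}
of 4-dimensional decompositions of 0. -/
def decompLattice4 (N : ℕ) (lφ lψ : ℤ) : Submodule ℤ (Fin 4 → ℤ) where
  carrier := {z | ((z 0 + z 1 * lφ + z 2 * lψ + z 3 * (lφ * lψ) : ℤ) : ZMod N) = 0}
  zero_mem' := by simp
  add_mem' := by
    intro a b ha hb
    simp only [Set.mem_setOf_eq, Pi.add_apply] at ha hb ⊢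
    push_cast at ha hb ⊢
    linear_combination ha + hb
  smul_mem' := by
    intro m a ha
    simp only [Set.mem_setOf_eq, Pi.smul_apply, smul_eq_mul] at ha ⊢
    push_cast at ha ⊢
    linear_combination (m : ZMod N) * ha

/-- The Guillevic–Ionica four-dimensional basis: if λ_ψ ≡ c·λ_φ + b,
λ_φ² - t_φ·λ_φ + n_φ ≡ 0, and λ_ψ² ≡ e (mod N), then the four vectors
b₁ = (e,0,-b,-c), b₂ = (0,e,c·n_φ, -c·t_φ-b), b₃ = (-b,-c,1,0),
b₄ = (c·n_φ, -c·t_φ-b, 0, 1) lie in L; and if N equals the absolute value of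
the determinant of the matrix with rows b₁,…,b₄, then they span L. -/
theorem guillevic_ionica_four_dimensional_basis
    (N : ℕ) (hN : 0 < N) (lφ lψ b c tφ nφ e : ℤ)
    (h1 : ((lψ : ℤ) : ZMod N) = ((c * lφ + b : ℤ) : ZMod N))
    (h2 : ((lφ ^ 2 - tφ * lφ + nφ : ℤ) : ZMod N) = 0)
    (h3 : ((lψ ^ 2 : ℤ) : ZMod N) = ((e : ℤ) : ZMod N)) :
    (![e, 0, -b, -c] ∈ decompLattice4 N lφ lψ ∧
      ![0, e, c * nφ, -(c * tφ) - b] ∈ decompLattice4 N lφ lψ ∧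
      ![-b, -c, 1, 0] ∈ decompLattice4 N lφ lψ ∧
      ![c * nφ, -(c * tφ) - b, 0, 1] ∈ decompLattice4 N lφ lψ) ∧
    (N = ((!![e, 0, -b, -c;
              0, e, c * nφ, -(c * tφ) - b;
              -b, -c, 1, 0;
              c * nφ, -(c * tφ) - b, 0, 1] : Matrix (Fin 4) (Fin 4) ℤ).det).natAbs →
      Submodule.span ℤ
          ({![e, 0, -b, -c], ![0, e, c * nφ, -(c * tφ) - b],
            ![-b, -c, 1, 0], ![c * nφ, -(c * tφ) - b, 0, 1]} : Set (Fin 4 → ℤ))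
        = decompLattice4 N lφ lψ) := by
  have hmem : ∀ w : Fin 4 → ℤ, w ∈ decompLattice4 N lφ lψ ↔
      ((w 0 + w 1 * lφ + w 2 * lψ + w 3 * (lφ * lψ) : ℤ) : ZMod N) = 0 :=
    fun w => Iff.rfl
  push_cast at h1 h2 h3
  -- the four membership relations, stated as ZMod identities
  have hm1 : ((e + 0 * lφ + (-b) * lψ + (-c) * (lφ * lψ) : ℤ) : ZMod N) = 0 := by
    push_cast
    linear_combination (-1 : ZMod N) * h3 + (lψ : ZMod N) * h1
  have hm2 : ((0 + e * lφ + (c * nφ) * lψ + (-(c * tφ) - b) * (lφ * lψ) : ℤ) : ZMod N) = 0 := by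
    push_cast
    linear_combination (-(lφ : ZMod N)) * h3 + (c : ZMod N) * (lψ : ZMod N) * h2 +
      (lψ : ZMod N) * (lφ : ZMod N) * h1
  have hm3 : ((-b + (-c) * lφ + 1 * lψ + 0 * (lφ * lψ) : ℤ) : ZMod N) = 0 := by
    push_cast
    linear_combination h1
  have hm4 : ((c * nφ + (-(c * tφ) - b) * lφ + 0 * lψ + 1 * (lφ * lψ) : ℤ) : ZMod N) = 0 := by
    push_cast
    linear_combination (lφ : ZMod N) * h1 + (c : ZMod N) * h2
  have hb1 : ![e, 0, -b, -c] ∈ decompLattice4 N lφ lψ := by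
    rw [hmem]; simpa using hm1
  have hb2 : ![0, e, c * nφ, -(c * tφ) - b] ∈ decompLattice4 N lφ lψ := by
    rw [hmem]; simpa using hm2
  have hb3 : ![-b, -c, 1, 0] ∈ decompLattice4 N lφ lψ := by
    rw [hmem]; simpa using hm3
  have hb4 : ![c * nφ, -(c * tφ) - b, 0, 1] ∈ decompLattice4 N lφ lψ := by
    rw [hmem]; simpa using hm4
  refine ⟨⟨hb1, hb2, hb3, hb4⟩, ?_⟩
  intro hdet
  -- 2×2 reduced data
  set A : ℤ := e - b ^ 2 + c ^ 2 * nφ with hA_def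
  set B : ℤ := -(2 * b * c) - c ^ 2 * tφ with hB_def
  set C : ℤ := 2 * b * c * nφ + c ^ 2 * tφ * nφ with hC_def
  set D : ℤ := e + c ^ 2 * nφ - (c * tφ + b) ^ 2 with hD_def
  set Δ : ℤ := A * D - B * C with hΔ_def
  have hdet4 : (!![e, 0, -b, -c;
              0, e, c * nφ, -(c * tφ) - b;
              -b, -c, 1, 0;
              c * nφ, -(c * tφ) - b, 0, 1] : Matrix (Fin 4) (Fin 4) ℤ).det = Δ := by
    rw [hΔ_def, hA_def, hB_def, hC_def, hD_def]
    simp [Matrix.det_succ_row_zero, Fin.sum_univ_succ, Fin.succAbove]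
    ring
  rw [hdet4] at hdet
  have hΔabs : (N : ℤ) = Δ ∨ (N : ℤ) = -Δ := by
    rcases Int.natAbs_eq Δ with h | h
    · left; rw [hdet]; exact h.symm ▸ rfl
    · right; omega
  have hΔne : Δ ≠ 0 := by
    rcases hΔabs with h | h <;> intro h0 <;> rw [h0] at h <;> omega
  have hNdvdΔ : ∀ m : ℤ, (N : ℤ) ∣ m → Δ ∣ m := by
    intro m ⟨k, hk⟩
    rcases hΔabs with h | h
    · exact ⟨k, by rw [hk, h]⟩
    · exact ⟨-k, by rw [hk]; rw [show Δ = -(N : ℤ) by omega]; ring⟩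
  -- ZMod relations for the reduced 2×2 rows
  have hA0 : ((A + B * lφ : ℤ) : ZMod N) = 0 := by
    push_cast [hA_def, hB_def]
    linear_combination (c : ZMod N) ^ 2 * h2 - h3 +
      ((lψ : ZMod N) + c * lφ + b) * h1
  have hC0 : ((C + D * lφ : ℤ) : ZMod N) = 0 := by
    push_cast [hC_def, hD_def]
    linear_combination (-(lφ : ZMod N)) * h3 + (c : ZMod N) * (lψ : ZMod N) * h2 +
      (lψ : ZMod N) * (lφ : ZMod N) * h1 - (c : ZMod N) * nφ * h1 +
      ((c : ZMod N) * tφ + b) * ((lφ : ZMod N) * h1 + (c : ZMod N) * h2)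
  -- prove the inclusion L ≤ span
  apply le_antisymm
  · rw [Submodule.span_le]
    intro w hw
    simp only [Set.mem_insert_iff, Set.mem_singleton_iff] at hw
    rcases hw with rfl | rfl | rfl | rfl
    · exact hb1
    · exact hb2
    · exact hb3
    · exact hb4
  · intro z hz
    rw [hmem] at hz
    set x : ℤ := z 0 + b * z 2 - c * nφ * z 3 with hx_def
    set y : ℤ := z 1 + c * z 2 + (c * tφ + b) * z 3 with hy_def
    have hw : ((x + y * lφ : ℤ) : ZMod N) = 0 := by
      push_cast [hx_def, hy_def]
      push_cast at hz
      linear_combination hz - (z 2 : ZMod N) * h1 -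
        (z 3 : ZMod N) * ((lφ : ZMod N) * h1 + (c : ZMod N) * h2)
    have hd1 : (N : ℤ) ∣ x * D - y * C := by
      rw [← ZMod.intCast_zmod_eq_zero_iff_dvd]
      push_cast
      push_cast at hw hC0
      linear_combination (D : ZMod N) * hw - (y : ZMod N) * hC0
    have hd2 : (N : ℤ) ∣ y * A - x * B := by
      rw [← ZMod.intCast_zmod_eq_zero_iff_dvd]
      push_cast
      push_cast at hw hA0
      linear_combination (y : ZMod N) * hA0 - (B : ZMod N) * hw
    obtain ⟨α, hα⟩ := hNdvdΔ _ hd1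
    obtain ⟨β, hβ⟩ := hNdvdΔ _ hd2
    have hxe : α * A + β * C = x := by
      apply mul_left_cancel₀ hΔne
      linear_combination (-A) * hα - C * hβ
    have hye : α * B + β * D = y := by
      apply mul_left_cancel₀ hΔne
      linear_combination (-B) * hα - D * hβ
    have hzrep : z = α • ![e, 0, -b, -c] + β • ![0, e, c * nφ, -(c * tφ) - b] +
        (z 2 + α * b - β * (c * nφ)) • ![-b, -c, 1, 0] +
        (z 3 + α * c + β * (c * tφ + b)) • ![c * nφ, -(c * tφ) - b, 0, 1] := by
      funext i
      fin_cases i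
      · show z 0 = α * e + β * 0 + (z 2 + α * b - β * (c * nφ)) * (-b) +
          (z 3 + α * c + β * (c * tφ + b)) * (c * nφ)
        rw [hx_def] at hxe
        rw [hA_def, hC_def] at hxe
        linear_combination -hxe
      · show z 1 = α * 0 + β * e + (z 2 + α * b - β * (c * nφ)) * (-c) +
          (z 3 + α * c + β * (c * tφ + b)) * (-(c * tφ) - b)
        rw [hy_def] at hye
        rw [hB_def, hD_def] at hye
        linear_combination -hye
      · show z 2 = α * (-b) + β * (c * nφ) + (z 2 + α * b - β * (c * nφ)) * 1 +
          (z 3 + α * c + β * (c * tφ + b)) * 0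
        ring
      · show z 3 = α * (-c) + β * (-(c * tφ) - b) + (z 2 + α * b - β * (c * nφ)) * 0 +
          (z 3 + α * c + β * (c * tφ + b)) * 1
        ring
    rw [hzrep]
    have m1 : ![e, 0, -b, -c] ∈ Submodule.span ℤ
        ({![e, 0, -b, -c], ![0, e, c * nφ, -(c * tφ) - b],
          ![-b, -c, 1, 0], ![c * nφ, -(c * tφ) - b, 0, 1]} : Set (Fin 4 → ℤ)) :=
      Submodule.subset_span (by simp)
    have m2 : ![0, e, c * nφ, -(c * tφ) - b] ∈ Submodule.span ℤ
        ({![e, 0, -b, -c], ![0, e, c * nφ, -(c * tφ) - b],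
          ![-b, -c, 1, 0], ![c * nφ, -(c * tφ) - b, 0, 1]} : Set (Fin 4 → ℤ)) :=
      Submodule.subset_span (by simp)
    have m3 : ![-b, -c, 1, 0] ∈ Submodule.span ℤ
        ({![e, 0, -b, -c], ![0, e, c * nφ, -(c * tφ) - b],
          ![-b, -c, 1, 0], ![c * nφ, -(c * tφ) - b, 0, 1]} : Set (Fin 4 → ℤ)) :=
      Submodule.subset_span (by simp)
    have m4 : ![c * nφ, -(c * tφ) - b, 0, 1] ∈ Submodule.span ℤ
        ({![e, 0, -b, -c], ![0, e, c * nφ, -(c * tφ) - b],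
          ![-b, -c, 1, 0], ![c * nφ, -(c * tφ) - b, 0, 1]} : Set (Fin 4 → ℤ)) :=
      Submodule.subset_span (by simp)
    exact Submodule.add_mem _ (Submodule.add_mem _ (Submodule.add_mem _
      (Submodule.smul_mem _ _ m1) (Submodule.smul_mem _ _ m2))
      (Submodule.smul_mem _ _ m3)) (Submodule.smul_mem _ _ m4)
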